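/- A non-trivial identity u ≈ v holds in the monoid C_2 = ⟨a | a^2 = a^3⟩ with adjoined identity (equivalently, the variety defined by x^2 ≈ x^3 and xy ≈ yx) if and only if sim(u) = sim(v) and mul(u) = mul(v), where sim(w) is the set of letters occurring exactly once in w and mul(w) is the set of letters occurring at least twice in w. Concretely: the three-element commutative monoid {1, a, a^2} with a^3 = a^2 satisfies u ≈ v iff sim(u) = sim(v) and mul(u) = mul(v). -/

import Mathlib

private lemma sum_indicator {X : Type*} [DecidableEq X] (x : X) (l : List X) :
    (l.map (fun y => if y = x then 1 else 0)).sum = l.count x := by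
  induction l with
  | nil => simp
  | cons a t ih =>
    rcases eq_or_ne a x with h | h <;>
      simp [h, List.count_cons, ih, Nat.add_comm]

private lemma min2_sum {α : Type*} [DecidableEq α] {s : Finset α} {a b : α → ℕ}
    (h : ∀ i ∈ s, min (a i) 2 = min (b i) 2) :
    min (∑ i ∈ s, a i) 2 = min (∑ i ∈ s, b i) 2 := by
  induction s using Finset.induction with
  | empty => simp
  | insert _ _ hx ih =>
    rw [Finset.sum_insert hx, Finset.sum_insert hx]
    have h1 := h _ (Finset.mem_insert_self _ _)
    have h2 := ih fun i hi => h _ (Finset.mem_insert_of_mem hi)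
    omega

/-- A non-trivial identity u ≈ v holds in the three-element monoid {1, a, a²} with
a³ = a² (encoded as {0,1,2} with m * n = min (m+n) 2) iff sim(u) = sim(v) and
mul(u) = mul(v). -/
theorem stmt3 {X : Type*} [DecidableEq X] (u v : List X) (huv : u ≠ v) :
    (∀ f : X → ℕ, min ((u.map f).sum) 2 = min ((v.map f).sum) 2) ↔
      ((∀ x : X, u.count x = 1 ↔ v.count x = 1) ∧
        (∀ x : X, 2 ≤ u.count x ↔ 2 ≤ v.count x)) := by
  constructor
  · intro h
    have key : ∀ x : X, min (u.count x) 2 = min (v.count x) 2 := by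
      intro x
      have := h (fun y => if y = x then 1 else 0)
      rwa [sum_indicator, sum_indicator] at this
    exact ⟨fun x => by have := key x; omega, fun x => by have := key x; omega⟩
  · rintro ⟨h1, h2⟩ f
    have key : ∀ x : X, min (u.count x) 2 = min (v.count x) 2 := by
      intro x; have := h1 x; have := h2 x; omega
    set s := u.toFinset ∪ v.toFinset with hs
    have hsubu : u.toFinset ⊆ s := Finset.subset_union_left
    have hsubv : v.toFinset ⊆ s := Finset.subset_union_right
    have hu : (u.map f).sum = ∑ x ∈ s, u.count x * f x := by
      rw [Finset.sum_list_map_count, Finset.sum_subset hsubu]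
      · simp [smul_eq_mul]
      · intro x _ hx
        simp [List.count_eq_zero_of_not_mem (fun hm => hx (List.mem_toFinset.2 hm))]
    have hv : (v.map f).sum = ∑ x ∈ s, v.count x * f x := by
      rw [Finset.sum_list_map_count, Finset.sum_subset hsubv]
      · simp [smul_eq_mul]
      · intro x _ hx
        simp [List.count_eq_zero_of_not_mem (fun hm => hx (List.mem_toFinset.2 hm))]
    rw [hu, hv]
    apply min2_sum
    intro x _
    have h := key x
    rcases Nat.eq_zero_or_pos (f x) with hf | hf
    · simp [hf]
    · rcases le_or_gt 2 (u.count x) with hc | hc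
      · have hd : 2 ≤ v.count x := by omega
        have h1' : 2 ≤ u.count x * f x :=
          le_trans hc (Nat.le_mul_of_pos_right _ hf)
        have h2' : 2 ≤ v.count x * f x :=
          le_trans hd (Nat.le_mul_of_pos_right _ hf)
        omega
      · have : u.count x = v.count x := by omega
        rw [this]
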